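/- arXiv:1403.0909 — 2 statements merged into one kernel-verified Lean document; each statement's English description precedes it below -/
import Mathlib

section
/- Let Γ act on X. Suppose that every function H : X → ℝ of the form H(x) = Σᵢ₌₁ⁿ (hᵢ(x) − hᵢ(γᵢ⁻¹x)), with h₁,…,hₙ ∈ ℓ∞(X) and γ₁,…,γₙ ∈ Γ, satisfies sup_{x∈X} H(x) ≥ 0. Then there exists a Γ-invariant mean on ℓ∞(X) (i.e., the action of Γ on X is amenable). -/
open BoundedContinuousFunction
open Pointwise

set_option linter.unusedSectionVars false

/-- The left-regular lregTranslate of a bounded function: `(γ · f)(x) = f(γ⁻¹ • x)`. -/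
noncomputable def lregTranslate {Γ X : Type*} [Group Γ] [MulAction Γ X]
    [TopologicalSpace X] [DiscreteTopology X] (γ : Γ) (f : X →ᵇ ℝ) : X →ᵇ ℝ :=
  f.compContinuous ⟨fun x => γ⁻¹ • x, continuous_of_discreteTopology⟩

/-- A `Γ`-invariant mean on `ℓ∞(X)`: a positive linear functional with `m 1 = 1`
invariant under the left-regular action. -/
structure InvariantMean (Γ X : Type*) [Group Γ] [MulAction Γ X]
    [TopologicalSpace X] [DiscreteTopology X] where
  toFun : (X →ᵇ ℝ) →ₗ[ℝ] ℝ
  nonneg : ∀ f : X →ᵇ ℝ, (∀ x, 0 ≤ f x) → 0 ≤ toFun f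
  map_one : toFun 1 = 1
  invariant : ∀ (γ : Γ) (f : X →ᵇ ℝ), toFun (lregTranslate γ f) = toFun f

section Aux

variable {Γ X : Type*} [Group Γ] [MulAction Γ X]
    [TopologicalSpace X] [DiscreteTopology X]

lemma lreg_apply (γ : Γ) (f : X →ᵇ ℝ) (x : X) : lregTranslate γ f x = f (γ⁻¹ • x) := rfl

lemma lreg_smul (γ : Γ) (c : ℝ) (f : X →ᵇ ℝ) :
    lregTranslate γ (c • f) = c • lregTranslate γ f := by ext x; rfl

/-- The set of "Dixmier differences". -/
def dixS (Γ X : Type*) [Group Γ] [MulAction Γ X]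
    [TopologicalSpace X] [DiscreteTopology X] : Set (X →ᵇ ℝ) :=
  {d | ∃ (n : ℕ) (h : Fin n → (X →ᵇ ℝ)) (g : Fin n → Γ),
      d = ∑ i, (h i - lregTranslate (g i) (h i))}

lemma bddAboveRange (f : X →ᵇ ℝ) : BddAbove (Set.range fun x => f x) := by
  refine ⟨‖f‖, ?_⟩
  rintro _ ⟨x, rfl⟩
  exact (le_abs_self _).trans (f.norm_coe_le_norm x)

lemma dixS_zero : (0 : X →ᵇ ℝ) ∈ dixS Γ X :=
  ⟨0, fun i => 0, fun i => 1, by simp⟩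

lemma dixS_single (γ : Γ) (f : X →ᵇ ℝ) : f - lregTranslate γ f ∈ dixS Γ X :=
  ⟨1, fun _ => f, fun _ => γ, by simp⟩

lemma dixS_add {d₁ d₂ : X →ᵇ ℝ} (h₁ : d₁ ∈ dixS Γ X) (h₂ : d₂ ∈ dixS Γ X) :
    d₁ + d₂ ∈ dixS Γ X := by
  obtain ⟨n₁, h, g, rfl⟩ := h₁
  obtain ⟨n₂, h', g', rfl⟩ := h₂
  refine ⟨n₁ + n₂, Fin.append h h', Fin.append g g', ?_⟩
  rw [Fin.sum_univ_add]
  simp [Fin.append_left, Fin.append_right]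

lemma dixS_smul (c : ℝ) {d : X →ᵇ ℝ} (hd : d ∈ dixS Γ X) : c • d ∈ dixS Γ X := by
  obtain ⟨n, h, g, rfl⟩ := hd
  refine ⟨n, fun i => c • h i, g, ?_⟩
  rw [Finset.smul_sum]
  simp [smul_sub, lreg_smul]

lemma lreg_neg (γ : Γ) (f : X →ᵇ ℝ) : lregTranslate γ (-f) = - lregTranslate γ f := by
  ext x; rfl

lemma dixS_neg {d : X →ᵇ ℝ} (hd : d ∈ dixS Γ X) : -d ∈ dixS Γ X := by
  obtain ⟨n, h, g, rfl⟩ := hd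
  refine ⟨n, fun i => -h i, g, ?_⟩
  ext x
  simp [lreg_apply, Finset.sum_sub_distrib]
  ring

lemma dixS_sup_nonneg [Nonempty X]
    (hyp : ∀ (n : ℕ) (h : Fin n → (X →ᵇ ℝ)) (g : Fin n → Γ),
      0 ≤ ⨆ x : X, ∑ i, (h i x - h i ((g i)⁻¹ • x)))
    {d : X →ᵇ ℝ} (hd : d ∈ dixS Γ X) : 0 ≤ ⨆ x, d x := by
  obtain ⟨n, h, g, rfl⟩ := hd
  have := hyp n h g
  refine this.trans (le_of_eq ?_)
  congr 1
  ext x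
  simp [lreg_apply]

end Aux

/-- Dixmier's condition: if every `H(x) = Σᵢ (hᵢ(x) − hᵢ(γᵢ⁻¹x))` has `sup_x H(x) ≥ 0`,
then there is a `Γ`-invariant mean on `ℓ∞(X)`. -/
theorem invariant_mean_of_dixmier
    {Γ X : Type*} [Group Γ] [Countable Γ] [MulAction Γ X] [Nonempty X]
    [TopologicalSpace X] [DiscreteTopology X]
    (hyp : ∀ (n : ℕ) (h : Fin n → (X →ᵇ ℝ)) (g : Fin n → Γ),
      0 ≤ ⨆ x : X, ∑ i, (h i x - h i ((g i)⁻¹ • x))) :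
    Nonempty (InvariantMean Γ X) := by
  classical
  set S := dixS Γ X with hS
  -- the sublinear functional
  set p : (X →ᵇ ℝ) → ℝ := fun f => sInf ((fun d => ⨆ x, (f + d) x) '' S) with hp
  have hSnn : ∀ d ∈ S, (0:ℝ) ≤ ⨆ x, d x := fun d hd => dixS_sup_nonneg hyp hd
  have hne : ∀ f : X →ᵇ ℝ, ((fun d => ⨆ x, (f + d) x) '' S).Nonempty :=
    fun f => ⟨_, ⟨0, dixS_zero, rfl⟩⟩
  have hsup_ge : ∀ (f d : X →ᵇ ℝ), d ∈ S → -‖f‖ ≤ ⨆ x, (f + d) x := by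
    intro f d hd
    have h1 : (⨆ x, d x) ≤ (⨆ x, (f + d) x) + ‖f‖ := by
      refine ciSup_le fun x => ?_
      have h2 : (f + d) x ≤ ⨆ x, (f + d) x := le_ciSup (bddAboveRange _) x
      have h3 : -‖f‖ ≤ f x := (abs_le.mp (f.norm_coe_le_norm x)).1
      have : d x = (f + d) x - f x := by simp
      linarith
    linarith [hSnn d hd]
  have hbdd : ∀ f : X →ᵇ ℝ, BddBelow ((fun d => ⨆ x, (f + d) x) '' S) := by
    intro f
    exact ⟨-‖f‖, by rintro _ ⟨d, hd, rfl⟩; exact hsup_ge f d hd⟩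
  have p_le : ∀ (f d : X →ᵇ ℝ), d ∈ S → p f ≤ ⨆ x, (f + d) x :=
    fun f d hd => csInf_le (hbdd f) ⟨d, hd, rfl⟩
  have p_le_sup : ∀ f : X →ᵇ ℝ, p f ≤ ⨆ x, f x := by
    intro f
    simpa using p_le f 0 dixS_zero
  -- subadditivity
  have N_add : ∀ f₁ f₂ : X →ᵇ ℝ, p (f₁ + f₂) ≤ p f₁ + p f₂ := by
    intro f₁ f₂
    have key : ∀ d₁ ∈ S, ∀ d₂ ∈ S,
        p (f₁ + f₂) ≤ (⨆ x, (f₁ + d₁) x) + ⨆ x, (f₂ + d₂) x := by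
      intro d₁ hd₁ d₂ hd₂
      refine (p_le _ (d₁ + d₂) (dixS_add hd₁ hd₂)).trans ?_
      refine ciSup_le fun x => ?_
      have h1 : (f₁ + d₁) x ≤ ⨆ x, (f₁ + d₁) x := le_ciSup (bddAboveRange _) x
      have h2 : (f₂ + d₂) x ≤ ⨆ x, (f₂ + d₂) x := le_ciSup (bddAboveRange _) x
      have : (f₁ + f₂ + (d₁ + d₂)) x = (f₁ + d₁) x + (f₂ + d₂) x := by
        simp; ring
      linarith
    have step : ∀ d₁ ∈ S, p (f₁ + f₂) - (⨆ x, (f₁ + d₁) x) ≤ p f₂ := by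
      intro d₁ hd₁
      refine le_csInf (hne f₂) ?_
      rintro _ ⟨d₂, hd₂, rfl⟩
      linarith [key d₁ hd₁ d₂ hd₂]
    have : p (f₁ + f₂) - p f₂ ≤ p f₁ := by
      refine le_csInf (hne f₁) ?_
      rintro _ ⟨d₁, hd₁, rfl⟩
      linarith [step d₁ hd₁]
    linarith
  -- positive homogeneity
  have N_hom : ∀ c : ℝ, 0 < c → ∀ f : X →ᵇ ℝ, p (c • f) = c * p f := by
    intro c hc f
    have himg : (fun d => ⨆ x, (c • f + d) x) '' S
        = c • ((fun d => ⨆ x, (f + d) x) '' S) := by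
      ext r
      constructor
      · rintro ⟨d, hd, rfl⟩
        refine ⟨⨆ x, (f + c⁻¹ • d) x, ⟨c⁻¹ • d, dixS_smul _ hd, rfl⟩, ?_⟩
        show c • (⨆ x, (f + c⁻¹ • d) x) = ⨆ x, (c • f + d) x
        rw [smul_eq_mul, Real.mul_iSup_of_nonneg hc.le]
        congr 1; ext x
        simp [smul_inv_smul₀ hc.ne', mul_add]
        rw [← mul_assoc, mul_inv_cancel₀ hc.ne', one_mul]
      · rintro ⟨_, ⟨d, hd, rfl⟩, rfl⟩
        refine ⟨c • d, dixS_smul _ hd, ?_⟩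
        show (⨆ x, (c • f + c • d) x) = c • (⨆ x, (f + d) x)
        rw [smul_eq_mul, Real.mul_iSup_of_nonneg hc.le]
        congr 1; ext x
        simp [mul_add]
    rw [hp]
    simp only [himg]
    rw [Real.sInf_smul_of_nonneg hc.le, smul_eq_mul]
  -- the partial functional on constants
  have h1ne : (1 : X →ᵇ ℝ) ≠ 0 := by
    intro h
    have := DFunLike.congr_fun h (Classical.arbitrary X)
    simp at this
  set f₀ : (X →ᵇ ℝ) →ₗ.[ℝ] ℝ := LinearPMap.mkSpanSingleton (1 : X →ᵇ ℝ) (1 : ℝ) h1ne with hf₀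
  have p_const_ge : ∀ c : ℝ, c ≤ p (c • (1 : X →ᵇ ℝ)) := by
    intro c
    refine le_csInf (hne _) ?_
    rintro _ ⟨d, hd, rfl⟩
    have h1 : (⨆ x, d x) ≤ (⨆ x, (c • (1 : X →ᵇ ℝ) + d) x) - c := by
      refine ciSup_le fun x => ?_
      have h2 : (c • (1 : X →ᵇ ℝ) + d) x ≤ ⨆ x, (c • (1 : X →ᵇ ℝ) + d) x :=
        le_ciSup (bddAboveRange _) x
      have h3 : (c • (1 : X →ᵇ ℝ) + d) x = c + d x := by simp
      linarith
    linarith [hSnn d hd]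
  have hf₀le : ∀ v : f₀.domain, f₀ v ≤ p v := by
    rintro ⟨v, hv⟩
    obtain ⟨c, hc⟩ := Submodule.mem_span_singleton.1 hv
    have hv' : (⟨v, hv⟩ : f₀.domain) = ⟨c • (1 : X →ᵇ ℝ), hc ▸ hv⟩ := Subtype.ext hc.symm
    rw [hv']
    have := LinearPMap.mkSpanSingleton'_apply (1 : X →ᵇ ℝ) (1 : ℝ)
      (fun c hc => (smul_eq_zero.1 hc).elim (fun hc => by rw [hc, map_zero, zero_smul])
        fun hx' => absurd hx' h1ne) c (hc ▸ hv)
    calc (LinearPMap.mkSpanSingleton (1 : X →ᵇ ℝ) (1:ℝ) h1ne) ⟨c • 1, hc ▸ hv⟩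
        = c • (1:ℝ) := this
      _ ≤ p (c • 1) := by rw [smul_eq_mul, mul_one]; exact p_const_ge c
  obtain ⟨g, hg_eq, hg_le⟩ := exists_extension_of_le_sublinear f₀ p N_hom N_add hf₀le
  -- conclude
  have hg_one : g 1 = 1 := by
    have h1mem : (1 : X →ᵇ ℝ) ∈ f₀.domain := Submodule.mem_span_singleton_self _
    have h := hg_eq ⟨1, h1mem⟩
    exact h.trans (LinearPMap.mkSpanSingleton_apply ℝ ℝ h1ne 1)
  refine ⟨⟨g, ?_, hg_one, ?_⟩⟩
  · intro f hf
    have h1 : g (-f) ≤ p (-f) := hg_le (-f)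
    have h2 : p (-f) ≤ ⨆ x, (-f) x := p_le_sup (-f)
    have h3 : (⨆ x, (-f) x) ≤ 0 := ciSup_le fun x => by simpa using hf x
    have h4 : g (-f) = -g f := map_neg g f
    linarith
  · intro γ f
    set d := f - lregTranslate γ f with hd
    have hdS : d ∈ S := dixS_single γ f
    have hd' : -d ∈ S := dixS_neg hdS
    have h1 : g d ≤ 0 := by
      refine (hg_le d).trans ?_
      refine (p_le d (-d) hd').trans ?_
      have : (⨆ x, (d + -d) x) = 0 := by simp
      exact this.le
    have h2 : g (-d) ≤ 0 := by
      refine (hg_le (-d)).trans ?_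
      refine (p_le (-d) d hdS).trans ?_
      have : (⨆ x, (-d + d) x) = 0 := by simp
      exact this.le
    have h3 : g d = 0 := le_antisymm h1 (by rw [← neg_nonpos, ← map_neg]; exact h2)
    have h4 : g d = g f - g (lregTranslate γ f) := by rw [hd, map_sub]
    linarith
end

section
/- Let Γ act on X, and suppose X admits a paradoxical decomposition: disjoint subsets A₁,…,A_s, B₁,…,B_t, C of X and elements γ₁,…,γ_s, η₁,…,η_t ∈ Γ with γ₁ = η₁ = e, such that X = (⊔ᵢAᵢ) ⊔ (⊔ⱼBⱼ) ⊔ C = ⊔ᵢ γᵢAᵢ = ⊔ⱼ ηⱼBⱼ. Define H(x) = (1/(s+t−2))·[Σᵢ₌₂ˢ (𝟙_{Aᵢ}(x) − 𝟙_{Aᵢ}(γᵢ⁻¹x)) + Σⱼ₌₂ᵗ (𝟙_{Bⱼ}(x) − 𝟙_{Bⱼ}(ηⱼ⁻¹x))]. Then sup_{x∈X} H(x) ≤ −1/(s+t−2). -/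
open scoped Pointwise

lemma sum_indicator_le_one' {ι X : Type*} [Fintype ι] (S : ι → Set X)
    (h : Pairwise (Function.onFun Disjoint S)) (x : X) :
    ∑ i, (S i).indicator (1 : X → ℝ) x ≤ 1 := by
  by_cases hx : ∃ i, x ∈ S i
  · obtain ⟨i, hi⟩ := hx
    rw [Finset.sum_eq_single i]
    · simp [hi]
    · intro j _ hj
      rw [Set.indicator_apply_eq_zero]
      intro hxj
      exact absurd hi (Set.disjoint_left.mp (h hj) hxj)
    · simp
  · push_neg at hx
    have : ∀ i : ι, (S i).indicator (1 : X → ℝ) x = 0 := fun i =>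
      Set.indicator_of_notMem (hx i) _
    simp [this]

lemma sum_indicator_eq_one' {ι X : Type*} [Fintype ι] (S : ι → Set X)
    (h : Pairwise (Function.onFun Disjoint S)) (hc : (⋃ i, S i) = Set.univ) (x : X) :
    ∑ i, (S i).indicator (1 : X → ℝ) x = 1 := by
  have hx : x ∈ ⋃ i, S i := hc ▸ Set.mem_univ x
  obtain ⟨i, hi⟩ := Set.mem_iUnion.mp hx
  rw [Finset.sum_eq_single i]
  · simp [hi]
  · intro j _ hj
    rw [Set.indicator_apply_eq_zero]
    intro hxj
    exact absurd hi (Set.disjoint_left.mp (h hj) hxj)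
  · simp

/-- From a paradoxical decomposition `X = (⊔ᵢAᵢ) ⊔ (⊔ⱼBⱼ) ⊔ C = ⊔ᵢγᵢAᵢ = ⊔ⱼηⱼBⱼ`
(with `γ₁ = η₁ = e`), the function
`H(x) = (1/(s+t−2))·[Σᵢ₌₂ˢ(𝟙_{Aᵢ}(x) − 𝟙_{Aᵢ}(γᵢ⁻¹x)) + Σⱼ₌₂ᵗ(𝟙_{Bⱼ}(x) − 𝟙_{Bⱼ}(ηⱼ⁻¹x))]`
satisfies `sup_x H(x) ≤ −1/(s+t−2)`. -/
theorem paradoxical_gives_negative_H {Γ X : Type*} [Group Γ] [MulAction Γ X]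
    (s t : ℕ) (hs : 0 < s) (ht : 0 < t)
    (A : Fin s → Set X) (B : Fin t → Set X) (C : Set X)
    (γ : Fin s → Γ) (η : Fin t → Γ)
    (hγ1 : γ ⟨0, hs⟩ = 1) (hη1 : η ⟨0, ht⟩ = 1)
    (hAdisj : Pairwise (Function.onFun Disjoint A))
    (hBdisj : Pairwise (Function.onFun Disjoint B))
    (hABdisj : ∀ i j, Disjoint (A i) (B j))
    (hACdisj : ∀ i, Disjoint (A i) C)
    (hBCdisj : ∀ j, Disjoint (B j) C)
    (hcover : (⋃ i, A i) ∪ (⋃ j, B j) ∪ C = Set.univ)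
    (hAcover : (⋃ i, γ i • A i) = Set.univ)
    (hAcover_disj : Pairwise (Function.onFun Disjoint fun i => γ i • A i))
    (hBcover : (⋃ j, η j • B j) = Set.univ)
    (hBcover_disj : Pairwise (Function.onFun Disjoint fun j => η j • B j)) :
    ∀ x : X,
      (1 / ((s : ℝ) + t - 2)) *
        ((∑ i ∈ Finset.univ.erase ⟨0, hs⟩,
            ((A i).indicator (1 : X → ℝ) x - (A i).indicator (1 : X → ℝ) ((γ i)⁻¹ • x))) +
          ∑ j ∈ Finset.univ.erase ⟨0, ht⟩,
            ((B j).indicator (1 : X → ℝ) x - (B j).indicator (1 : X → ℝ) ((η j)⁻¹ • x)))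
        ≤ -(1 / ((s : ℝ) + t - 2)) := by
  intro x
  classical
  -- extend erased sums to full sums
  have hA0 : (A ⟨0, hs⟩).indicator (1 : X → ℝ) x
      - (A ⟨0, hs⟩).indicator (1 : X → ℝ) ((γ ⟨0, hs⟩)⁻¹ • x) = 0 := by
    rw [hγ1]; simp
  have hB0 : (B ⟨0, ht⟩).indicator (1 : X → ℝ) x
      - (B ⟨0, ht⟩).indicator (1 : X → ℝ) ((η ⟨0, ht⟩)⁻¹ • x) = 0 := by
    rw [hη1]; simp
  rw [Finset.sum_erase (f := fun i => (A i).indicator (1 : X → ℝ) x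
        - (A i).indicator (1 : X → ℝ) ((γ i)⁻¹ • x)) Finset.univ hA0,
    Finset.sum_erase (f := fun j => (B j).indicator (1 : X → ℝ) x
        - (B j).indicator (1 : X → ℝ) ((η j)⁻¹ • x)) Finset.univ hB0,
    Finset.sum_sub_distrib, Finset.sum_sub_distrib]
  -- translated indicators
  have htrA : ∀ i, (A i).indicator (1 : X → ℝ) ((γ i)⁻¹ • x)
      = ((γ i) • A i).indicator (1 : X → ℝ) x := by
    intro i
    rw [Set.indicator_apply, Set.indicator_apply]
    simp [Set.mem_smul_set_iff_inv_smul_mem]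
  have htrB : ∀ j, (B j).indicator (1 : X → ℝ) ((η j)⁻¹ • x)
      = ((η j) • B j).indicator (1 : X → ℝ) x := by
    intro j
    rw [Set.indicator_apply, Set.indicator_apply]
    simp [Set.mem_smul_set_iff_inv_smul_mem]
  have hA1 : ∑ i, (A i).indicator (1 : X → ℝ) ((γ i)⁻¹ • x) = 1 := by
    simp_rw [htrA]
    exact sum_indicator_eq_one' _ hAcover_disj hAcover x
  have hB1 : ∑ j, (B j).indicator (1 : X → ℝ) ((η j)⁻¹ • x) = 1 := by
    simp_rw [htrB]
    exact sum_indicator_eq_one' _ hBcover_disj hBcover x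
  -- combined bound
  have hSdisj : Pairwise (Function.onFun Disjoint (Sum.elim A B)) := by
    intro a b hab
    cases a with
    | inl i => cases b with
      | inl i' => exact hAdisj (fun h => hab (by rw [h]))
      | inr j => exact hABdisj i j
    | inr j => cases b with
      | inl i => exact (hABdisj i j).symm
      | inr j' => exact hBdisj (fun h => hab (by rw [h]))
  have hle := sum_indicator_le_one' (Sum.elim A B) hSdisj x
  rw [Fintype.sum_sum_type] at hle
  simp only [Sum.elim_inl, Sum.elim_inr] at hle
  have hinner : (∑ i, (A i).indicator (1 : X → ℝ) x - ∑ i, (A i).indicator (1 : X → ℝ) ((γ i)⁻¹ • x))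
      + (∑ j, (B j).indicator (1 : X → ℝ) x - ∑ j, (B j).indicator (1 : X → ℝ) ((η j)⁻¹ • x))
      ≤ -1 := by
    rw [hA1, hB1]; linarith
  have hc : (0 : ℝ) ≤ 1 / ((s : ℝ) + t - 2) := by
    apply one_div_nonneg.mpr
    have : (1 : ℝ) ≤ s := by exact_mod_cast hs
    have : (1 : ℝ) ≤ t := by exact_mod_cast ht
    linarith
  have := mul_le_mul_of_nonneg_left hinner hc
  linarith
end
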